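/- Let F be a field, let n be a natural number, let b : Fin n → ℕ be a block-index function, and let X be an n×n matrix over F that is block diagonal with respect to b (X i j = 0 whenever b i ≠ b j). Assume that every n×n matrix over F commuting with X is block diagonal with respect to b. Then for every strictly upper-block matrix V (V i j = 0 unless b i < b j) there exists a unique strictly upper-block matrix N such that (1 + N) * X = (X + V) * (1 + N); in particular, since 1 + N is invertible, X + V is conjugate to X by the unipotent element 1 + N. -/

import Mathlib

open Matrix

private lemma stmt_2_key (F : Type*) [Field F] (n : ℕ) (b : Fin n → ℕ)
    (X V N : Matrix (Fin n) (Fin n) F)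
    (hX : ∀ i j, b i ≠ b j → X i j = 0)
    (hcent : ∀ Y : Matrix (Fin n) (Fin n) F, X * Y = Y * X →
      ∀ i j, b i ≠ b j → Y i j = 0)
    (hV : ∀ i j, ¬ b i < b j → V i j = 0)
    (hN : ∀ i j, ¬ b i < b j → N i j = 0)
    (heq : N * X = X * N + V * N) : N = 0 := by
  classical
  by_contra hN0
  set T : Finset ℕ := (Finset.univ.image b).filter
    (fun p => ∃ i j, b i = p ∧ N i j ≠ 0) with hT
  have hTne : T.Nonempty := by
    obtain ⟨i, j, hij⟩ : ∃ i j, N i j ≠ 0 := by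
      by_contra h
      push_neg at h
      exact hN0 (by ext i j; simp [h i j])
    exact ⟨b i, Finset.mem_filter.mpr
      ⟨Finset.mem_image_of_mem b (Finset.mem_univ i), i, j, rfl, hij⟩⟩
  set p := T.max' hTne with hp
  have hmax : ∀ k j, p < b k → N k j = 0 := by
    intro k j hk
    by_contra h
    have hmem : b k ∈ T := Finset.mem_filter.mpr
      ⟨Finset.mem_image_of_mem b (Finset.mem_univ k), k, j, rfl, h⟩
    exact absurd (T.le_max' _ hmem) (not_le.mpr hk)
  set N' : Matrix (Fin n) (Fin n) F :=
    Matrix.of (fun i j => if b i = p then N i j else 0) with hN'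
  -- V * N vanishes on rows at level p
  have hVN : ∀ i j, b i = p → (V * N) i j = 0 := by
    intro i j hbi
    rw [Matrix.mul_apply]
    apply Finset.sum_eq_zero
    intro k _
    by_cases hk : b i < b k
    · rw [hmax k j (hbi ▸ hk), mul_zero]
    · rw [hV i k hk, zero_mul]
  have hcomm : X * N' = N' * X := by
    ext i j
    rw [Matrix.mul_apply, Matrix.mul_apply]
    by_cases hbi : b i = p
    · have h1 : ∀ k, X i k * N' k j = X i k * N k j := by
        intro k
        by_cases hk : b k = p
        · simp [hN', hk]
        · rw [hX i k (by rw [hbi]; exact fun h => hk h.symm)]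
          simp
      have h2 : ∀ k, N' i k * X k j = N i k * X k j := by
        intro k; simp [hN', hbi]
      simp only [h1, h2]
      have := congrArg (fun M => M i j) heq
      simp only [Matrix.add_apply] at this
      rw [← Matrix.mul_apply, ← Matrix.mul_apply, this, hVN i j hbi, add_zero]
    · have h1 : ∀ k, X i k * N' k j = 0 := by
        intro k
        by_cases hk : b k = p
        · rw [hX i k (by rw [hk]; exact hbi), zero_mul]
        · simp [hN', hk]
      have h2 : ∀ k, N' i k * X k j = 0 := by
        intro k; simp [hN', hbi]
      simp [h1, h2]
  -- hence N' is block diagonal, but also strictly upper: N' = 0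
  have hrow : ∀ i j, b i = p → N i j = 0 := by
    intro i j hbi
    by_cases hlt : b i < b j
    · have := hcent N' hcomm i j (Nat.ne_of_lt hlt)
      simpa [hN', hbi] using this
    · exact hN i j hlt
  have hq' := (Finset.mem_filter.mp (T.max'_mem hTne)).2
  obtain ⟨i, j, hbi, hij⟩ := hq'
  exact hij (hrow i j hbi)

/-- Matrix form of the implication (5) ⇒ (7): if every matrix commuting with
the block-diagonal matrix `X` is block diagonal, then every `X + V` with `V`
strictly upper-block is conjugate to `X` by a unique unipotent element `1 + N`
with `N` strictly upper-block. -/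
theorem stmt_2 (F : Type*) [Field F] (n : ℕ) (b : Fin n → ℕ)
    (X : Matrix (Fin n) (Fin n) F)
    (hX : ∀ i j, b i ≠ b j → X i j = 0)
    (hcent : ∀ Y : Matrix (Fin n) (Fin n) F, X * Y = Y * X →
      ∀ i j, b i ≠ b j → Y i j = 0) :
    ∀ V : Matrix (Fin n) (Fin n) F, (∀ i j, ¬ b i < b j → V i j = 0) →
      (∃! N : Matrix (Fin n) (Fin n) F,
        (∀ i j, ¬ b i < b j → N i j = 0) ∧ (1 + N) * X = (X + V) * (1 + N)) ∧
      ∃ u : (Matrix (Fin n) (Fin n) F)ˣ,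
        (u : Matrix (Fin n) (Fin n) F) * X = (X + V) * (u : Matrix (Fin n) (Fin n) F) := by
  classical
  intro V hV
  -- the space of strictly upper-block matrices
  set P : Matrix (Fin n) (Fin n) F → Prop :=
    fun M => ∀ i j, ¬ b i < b j → M i j = 0 with hP
  have hmulX : ∀ A, P A → P (A * X) := by
    intro A hA i j hij
    rw [Matrix.mul_apply]
    apply Finset.sum_eq_zero
    intro k _
    by_cases hk : b i < b k
    · rw [hX k j (fun h => hij (h ▸ hk)), mul_zero]
    · rw [hA i k hk, zero_mul]
  have hXmul : ∀ A, P A → P (X * A) := by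
    intro A hA i j hij
    rw [Matrix.mul_apply]
    apply Finset.sum_eq_zero
    intro k _
    by_cases hk : b k < b j
    · rw [hX i k (fun h => hij (h ▸ hk)), zero_mul]
    · rw [hA k j hk, mul_zero]
  have hVmul : ∀ A, P A → P (V * A) := by
    intro A hA i j hij
    rw [Matrix.mul_apply]
    apply Finset.sum_eq_zero
    intro k _
    by_cases hk : b i < b k
    · rw [hA k j (fun h => hij (hk.trans h)), mul_zero]
    · rw [hV i k hk, zero_mul]
  set U : Submodule F (Matrix (Fin n) (Fin n) F) :=
    { carrier := {M | P M}
      add_mem' := fun {A B} hA hB i j hij => by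
        simp [Matrix.add_apply, hA i j hij, hB i j hij]
      zero_mem' := fun i j _ => rfl
      smul_mem' := fun c {A} hA i j hij => by
        simp [Matrix.smul_apply, hA i j hij] } with hU
  have hUmem : ∀ M : Matrix (Fin n) (Fin n) F, M ∈ U ↔ P M := fun M => Iff.rfl
  let ψ : U →ₗ[F] U :=
    { toFun := fun N => ⟨(N : Matrix (Fin n) (Fin n) F) * X - X * N - V * N,
        by
          intro i j hij
          simp [Matrix.sub_apply, hmulX N N.2 i j hij, hXmul N N.2 i j hij,
            hVmul N N.2 i j hij]⟩
      map_add' := fun A B => by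
        ext : 1
        simp only [Submodule.coe_add, AddSubmonoid.coe_add]
        noncomm_ring
      map_smul' := fun c A => by
        ext : 1
        push_cast
        simp only [Matrix.smul_mul, Matrix.mul_smul, smul_sub, RingHom.id_apply, id_eq] }
  have hinj : Function.Injective ψ := by
    rw [injective_iff_map_eq_zero ψ]
    intro N hNz
    have h0 : (N : Matrix (Fin n) (Fin n) F) * X - X * N - V * N = 0 :=
      congrArg Subtype.val hNz
    have heq : (N : Matrix (Fin n) (Fin n) F) * X = X * N + V * N := by
      rw [sub_sub, sub_eq_zero] at h0; exact h0
    ext : 1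
    exact stmt_2_key F n b X V N hX hcent hV N.2 heq
  have hsurj : Function.Surjective ψ :=
    (LinearMap.injective_iff_surjective).mp hinj
  obtain ⟨N, hNeq⟩ := hsurj ⟨V, hV⟩
  have hNval : (N : Matrix (Fin n) (Fin n) F) * X - X * N - V * N = V :=
    congrArg Subtype.val hNeq
  have hconj : (1 + (N : Matrix (Fin n) (Fin n) F)) * X
      = (X + V) * (1 + (N : Matrix (Fin n) (Fin n) F)) := by
    have h' : (N : Matrix (Fin n) (Fin n) F) * X = X * N + V * N + V := by
      rw [sub_sub, sub_eq_iff_eq_add] at hNval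
      rw [hNval]; abel
    rw [add_mul, one_mul, mul_add, mul_one, add_mul, h']
    abel
  have hexp : ∀ A : Matrix (Fin n) (Fin n) F,
      (1 + A) * X = (X + V) * (1 + A) → A * X = X * A + V * A + V := by
    intro A h
    have key : A * X - (X * A + V * A + V) = (1 + A) * X - (X + V) * (1 + A) := by
      noncomm_ring
    rw [h, sub_self, sub_eq_zero] at key
    exact key
  refine ⟨⟨N, ⟨N.2, hconj⟩, ?_⟩, ?_⟩
  · -- uniqueness
    rintro M ⟨hM, hMconj⟩
    have hMeq := hexp M hMconj
    have hNeq' := hexp N hconj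
    have hdiff : (M - (N : Matrix (Fin n) (Fin n) F)) * X
        = X * (M - N) + V * (M - N) := by
      have key : (M - (N : Matrix (Fin n) (Fin n) F)) * X
            - (X * (M - N) + V * (M - N))
          = (M * X - (X * M + V * M + V))
            - ((N : Matrix (Fin n) (Fin n) F) * X - (X * N + V * N + V)) := by
        noncomm_ring
      rw [hMeq, hNeq', sub_self, sub_self, sub_self, sub_eq_zero] at key
      exact key
    have hPdiff : ∀ i j, ¬ b i < b j → (M - (N : Matrix (Fin n) (Fin n) F)) i j = 0 := by
      intro i j hij
      simp [Matrix.sub_apply, hM i j hij, N.2 i j hij]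
    have := stmt_2_key F n b X V (M - N) hX hcent hV hPdiff hdiff
    rw [sub_eq_zero] at this
    exact this
  · -- invertibility of 1 + N
    have hBT : Matrix.BlockTriangular (1 + (N : Matrix (Fin n) (Fin n) F)) b := by
      intro i j hij
      have hne : i ≠ j := fun h => by subst h; exact lt_irrefl _ hij
      simp [Matrix.add_apply, Matrix.one_apply_ne hne,
        N.2 i j (fun h => (lt_asymm hij) h)]
    have hdet : (1 + (N : Matrix (Fin n) (Fin n) F)).det = 1 := by
      rw [hBT.det]
      apply Finset.prod_eq_one
      intro a _
      have hblock : (1 + (N : Matrix (Fin n) (Fin n) F)).toSquareBlock b a = 1 := by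
        ext i j
        have hbi : b (i : Fin n) = a := i.2
        have hbj : b (j : Fin n) = a := j.2
        have hNij : (N : Matrix (Fin n) (Fin n) F) (i : Fin n) (j : Fin n) = 0 :=
          N.2 _ _ (by rw [hbi, hbj]; exact lt_irrefl a)
        simp [Matrix.toSquareBlock_def, Matrix.add_apply, hNij,
          Matrix.one_apply, Subtype.ext_iff]
      rw [hblock, Matrix.det_one]
    have hu : IsUnit (1 + (N : Matrix (Fin n) (Fin n) F)) :=
      (Matrix.isUnit_iff_isUnit_det _).mpr (by rw [hdet]; exact isUnit_one)
    obtain ⟨u, hu⟩ := hu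
    exact ⟨u, by rw [hu]; exact hconj⟩
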